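/- arXiv:1503.04314 — 2 statements merged into one kernel-verified Lean document; each statement's English description precedes it below -/
import Mathlib

section
/- Existence and uniqueness of the eigenvalue of nonpositive type of a truncation: for every n ≥ 1 there exists exactly one complex number λ with Im λ ≥ 0 for which there is a nonzero f ∈ ℂ^{n+1} with H_{[0,n]} f = λ f and −|f_0|² + Σ_{j=1}^{n} |f_j|² ≤ 0. -/
open MeasureTheory Complex Filter

/-- The (n+1)×(n+1) truncation H_{[0,n]} of the non-symmetric Jacobi matrix. -/
noncomputable def JacobiH0 (a b : ℕ → ℝ) (n : ℕ) : Matrix (Fin (n + 1)) (Fin (n + 1)) ℂ :=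
  Matrix.of fun i j =>
    if (i : ℕ) = (j : ℕ) then (a i : ℂ)
    else if (i : ℕ) + 1 = (j : ℕ) then (if (i : ℕ) = 0 then -(b 0 : ℂ) else (b (i : ℕ) : ℂ))
    else if (j : ℕ) + 1 = (i : ℕ) then (b (j : ℕ) : ℂ)
    else 0

/-- The n×n truncation H_{[1,n]} of the symmetric Jacobi matrix (entries shifted by one). -/
noncomputable def JacobiH1 (a b : ℕ → ℝ) (n : ℕ) : Matrix (Fin n) (Fin n) ℂ :=
  Matrix.of fun i j =>
    if (i : ℕ) = (j : ℕ) then (a ((i : ℕ) + 1) : ℂ)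
    else if (i : ℕ) + 1 = (j : ℕ) then (b ((i : ℕ) + 1) : ℂ)
    else if (j : ℕ) + 1 = (i : ℕ) then (b ((j : ℕ) + 1) : ℂ)
    else 0

/-- `lam` is an eigenvalue of nonpositive type of H_{[0,n]}. -/
def IsNPTev (a b : ℕ → ℝ) (n : ℕ) (lam : ℂ) : Prop :=
  0 ≤ lam.im ∧ ∃ f : Fin (n + 1) → ℂ, f ≠ 0 ∧ (JacobiH0 a b n).mulVec f = lam • f ∧
    -‖f 0‖ ^ 2 + ∑ j : Fin n, ‖f j.succ‖ ^ 2 ≤ 0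



open Polynomial

noncomputable def qp (a b : ℕ → ℝ) : ℕ → Polynomial ℝ
  | 0 => 1
  | 1 => Polynomial.C ((b 0)⁻¹) * (Polynomial.C (a 0) - Polynomial.X)
  | (k+2) => Polynomial.C ((b (k+1))⁻¹) *
      ((Polynomial.X - Polynomial.C (a (k+1))) * qp a b (k+1) - Polynomial.C (b k) * qp a b k)

noncomputable def Fv (a b : ℕ → ℝ) (z : ℂ) (k : ℕ) : ℂ := Polynomial.aeval z (qp a b k)

noncomputable def Gv (a b : ℕ → ℝ) (z : ℂ) (k : ℕ) : ℂ :=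
  Polynomial.aeval z (Polynomial.derivative (qp a b k))

variable {a b : ℕ → ℝ}

lemma Fv_zero (z : ℂ) : Fv a b z 0 = 1 := by simp [Fv, qp]

lemma Fv_one (hb : 0 < b 0) (z : ℂ) : (b 0 : ℂ) * Fv a b z 1 = (a 0 : ℂ) - z := by
  have h : (b 0 : ℂ) ≠ 0 := by exact_mod_cast hb.ne'
  simp [Fv, qp, Complex.ofReal_inv]
  field_simp

lemma Fv_rec (k : ℕ) (hb : 0 < b (k+1)) (z : ℂ) :
    (b (k+1) : ℂ) * Fv a b z (k+2)
      = (z - (a (k+1) : ℂ)) * Fv a b z (k+1) - (b k : ℂ) * Fv a b z k := by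
  have h : (b (k+1) : ℂ) ≠ 0 := by exact_mod_cast hb.ne'
  simp [Fv, qp, Complex.ofReal_inv]
  field_simp

lemma Gv_zero (z : ℂ) : Gv a b z 0 = 0 := by simp [Gv, qp]

lemma Gv_one (hb : 0 < b 0) (z : ℂ) : (b 0 : ℂ) * Gv a b z 1 = -1 := by
  have h : (b 0 : ℂ) ≠ 0 := by exact_mod_cast hb.ne'
  simp [Gv, qp, Complex.ofReal_inv]
  field_simp

lemma Gv_rec (k : ℕ) (hb : 0 < b (k+1)) (z : ℂ) :
    (b (k+1) : ℂ) * Gv a b z (k+2)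
      = Fv a b z (k+1) + (z - (a (k+1) : ℂ)) * Gv a b z (k+1) - (b k : ℂ) * Gv a b z k := by
  have h : (b (k+1) : ℂ) ≠ 0 := by exact_mod_cast hb.ne'
  simp [Gv, Fv, qp, Complex.ofReal_inv, derivative_mul, derivative_sub]
  field_simp



lemma qp_deg (hb : ∀ j, 0 < b j) : ∀ k, (qp a b k).natDegree ≤ k ∧ (qp a b k).coeff k ≠ 0
  | 0 => by simp [qp]
  | 1 => by
      constructor
      · apply le_trans (natDegree_mul_le)
        simp
        apply le_trans (natDegree_sub_le _ _)
        simp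
      · simp [qp, coeff_sub]
        exact (hb 0).ne'
  | (k+2) => by
      obtain ⟨hd1, hc1⟩ := qp_deg hb (k+1)
      obtain ⟨hd0, hc0⟩ := qp_deg hb k
      have hbk : (b (k+1))⁻¹ ≠ 0 := inv_ne_zero (hb (k+1)).ne'
      constructor
      · apply le_trans (natDegree_mul_le)
        simp only [natDegree_C, zero_add]
        apply le_trans (natDegree_sub_le _ _)
        simp only [sup_le_iff]
        constructor
        · apply le_trans (natDegree_mul_le)
          have : (Polynomial.X - Polynomial.C (a (k+1))).natDegree ≤ 1 := by
            apply le_trans (natDegree_sub_le _ _); simp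
          omega
        · apply le_trans (natDegree_mul_le)
          simp
          omega
      · simp only [qp]
        rw [coeff_C_mul, coeff_sub, coeff_C_mul, sub_mul, coeff_sub, coeff_X_mul,
          coeff_C_mul, coeff_eq_zero_of_natDegree_lt (by omega : (qp a b (k+1)).natDegree < k+2),
          coeff_eq_zero_of_natDegree_lt (by omega : (qp a b k).natDegree < k+2)]
        simpa using ⟨(hb (k+1)).ne', hc1⟩

noncomputable def epsv {m : ℕ} (i : Fin m) : ℂ := if (i:ℕ) = 0 then -1 else 1

noncomputable def Bf {m : ℕ} (f g : Fin m → ℂ) : ℂ :=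
  ∑ i, epsv i * f i * (starRingEnd ℂ) (g i)

variable {a b : ℕ → ℝ} {n : ℕ}

lemma entry_decomp (a b : ℕ → ℝ) (n : ℕ) (i j : Fin (n+1)) : JacobiH0 a b n i j =
    (if (j:ℕ) = (i:ℕ) then (a (i:ℕ) : ℂ) else 0)
    + (if (j:ℕ) = (i:ℕ)+1 then (if (i:ℕ) = 0 then -(b 0:ℂ) else (b (i:ℕ):ℂ)) else 0)
    + (if (j:ℕ)+1 = (i:ℕ) then (b (j:ℕ):ℂ) else 0) := by
  simp only [JacobiH0, Matrix.of_apply]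
  split_ifs <;> (try omega) <;> (try ring) <;> (subst_vars; rfl)

lemma conj_entry (i j : Fin (n+1)) :
    (starRingEnd ℂ) (JacobiH0 a b n i j) = JacobiH0 a b n i j := by
  simp only [JacobiH0, Matrix.of_apply]
  split_ifs <;> simp

lemma eps_entry (i j : Fin (n+1)) :
    epsv i * JacobiH0 a b n i j = epsv j * JacobiH0 a b n j i := by
  obtain ⟨iv, hi⟩ := i
  obtain ⟨jv, hj⟩ := j
  simp only [JacobiH0, epsv, Matrix.of_apply]
  split_ifs <;> (try omega) <;> (try ring) <;> (subst_vars; rfl)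

lemma sum_ite_nat {N : ℕ} (m : ℕ) (g : Fin N → ℂ) :
    (∑ j : Fin N, if (j:ℕ) = m then g j else 0) = if h : m < N then g ⟨m, h⟩ else 0 := by
  split_ifs with h
  · have he : ∀ j : Fin N, ((j:ℕ) = m) = (j = ⟨m, h⟩) := by
      intro j; rw [eq_iff_iff]
      constructor
      · intro hh; exact Fin.ext hh
      · intro hh; rw [hh]
    simp only [he]
    rw [Finset.sum_ite_eq' Finset.univ]
    simp
  · apply Finset.sum_eq_zero
    intro j _
    rw [if_neg]
    have := j.isLt; omega

lemma mulVec_apply (a b : ℕ → ℝ) (n : ℕ) (f : ℕ → ℂ) (i : Fin (n+1)) :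
    (JacobiH0 a b n).mulVec (fun j : Fin (n+1) => f (j:ℕ)) i =
      (if 0 < (i:ℕ) then (b ((i:ℕ)-1):ℂ) * f ((i:ℕ)-1) else 0)
      + (a (i:ℕ):ℂ) * f (i:ℕ)
      + (if (i:ℕ) < n then (if (i:ℕ) = 0 then -(b 0:ℂ) else (b (i:ℕ):ℂ)) * f ((i:ℕ)+1) else 0) := by
  unfold Matrix.mulVec dotProduct
  simp only [entry_decomp a b n i, add_mul, Finset.sum_add_distrib, ite_mul, zero_mul]
  have h1 : (∑ j : Fin (n+1), if (j:ℕ) = (i:ℕ) then (a (i:ℕ):ℂ) * f (j:ℕ) else 0)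
      = (a (i:ℕ):ℂ) * f (i:ℕ) := by
    rw [sum_ite_nat]
    simp [i.isLt]
  have h2 : (∑ j : Fin (n+1), if (j:ℕ) = (i:ℕ)+1 then
        (if (i:ℕ) = 0 then -(b 0:ℂ) * f (j:ℕ) else (b (i:ℕ):ℂ) * f (j:ℕ)) else 0)
      = (if (i:ℕ) < n then (if (i:ℕ) = 0 then -(b 0:ℂ) * f ((i:ℕ)+1) else (b (i:ℕ):ℂ) * f ((i:ℕ)+1)) else 0) := by
    rw [sum_ite_nat]
    by_cases hi : (i:ℕ) < n
    · rw [dif_pos (by omega), if_pos hi]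
    · rw [dif_neg (by omega), if_neg hi]
  have h3 : (∑ j : Fin (n+1), if (j:ℕ)+1 = (i:ℕ) then (b (j:ℕ):ℂ) * f (j:ℕ) else 0)
      = (if 0 < (i:ℕ) then (b ((i:ℕ)-1):ℂ) * f ((i:ℕ)-1) else 0) := by
    by_cases hi : 0 < (i:ℕ)
    · have he : ∀ j : Fin (n+1), ((j:ℕ)+1 = (i:ℕ)) = ((j:ℕ) = (i:ℕ)-1) := by
        intro j; rw [eq_iff_iff]; omega
      simp only [he]
      rw [sum_ite_nat, dif_pos (by omega : (i:ℕ)-1 < n+1), if_pos hi]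
    · rw [if_neg hi]
      apply Finset.sum_eq_zero
      intro j _
      rw [if_neg (by omega)]
  rw [h1, h2, h3]
  split_ifs <;> ring

lemma Bf_mulVec (f g : Fin (n+1) → ℂ) :
    Bf ((JacobiH0 a b n).mulVec f) g = Bf f ((JacobiH0 a b n).mulVec g) := by
  unfold Bf Matrix.mulVec dotProduct
  have L : ∀ i : Fin (n+1), epsv i * (∑ j, JacobiH0 a b n i j * f j) * (starRingEnd ℂ) (g i)
      = ∑ j, epsv i * JacobiH0 a b n i j * f j * (starRingEnd ℂ) (g i) := by
    intro i
    rw [Finset.mul_sum, Finset.sum_mul]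
    exact Finset.sum_congr rfl fun j _ => by ring
  have R : ∀ i : Fin (n+1), epsv i * f i * (starRingEnd ℂ) (∑ j, JacobiH0 a b n i j * g j)
      = ∑ j, epsv i * JacobiH0 a b n i j * f i * (starRingEnd ℂ) (g j) := by
    intro i
    rw [map_sum, Finset.mul_sum]
    refine Finset.sum_congr rfl fun j _ => ?_
    rw [map_mul, conj_entry]
    ring
  simp only [L, R]
  rw [Finset.sum_comm]
  refine Finset.sum_congr rfl fun i _ => Finset.sum_congr rfl fun j _ => ?_
  linear_combination (f i * (starRingEnd ℂ) (g j)) * eps_entry (a := a) (b := b) j i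

lemma Bf_add_left (f f' g : Fin m → ℂ) : Bf (f + f') g = Bf f g + Bf f' g := by
  unfold Bf
  rw [← Finset.sum_add_distrib]
  exact Finset.sum_congr rfl fun i _ => by simp [Pi.add_apply]; ring

lemma Bf_sub_left (f f' g : Fin m → ℂ) : Bf (f - f') g = Bf f g - Bf f' g := by
  unfold Bf
  rw [← Finset.sum_sub_distrib]
  exact Finset.sum_congr rfl fun i _ => by simp [Pi.sub_apply]; ring

lemma Bf_add_right (f g g' : Fin m → ℂ) : Bf f (g + g') = Bf f g + Bf f g' := by
  unfold Bf
  rw [← Finset.sum_add_distrib]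
  exact Finset.sum_congr rfl fun i _ => by simp [Pi.add_apply, map_add]; ring

lemma Bf_smul_left (c : ℂ) (f g : Fin m → ℂ) : Bf (c • f) g = c * Bf f g := by
  unfold Bf
  rw [Finset.mul_sum]
  exact Finset.sum_congr rfl fun i _ => by simp [Pi.smul_apply, smul_eq_mul]; ring

lemma Bf_smul_right (c : ℂ) (f g : Fin m → ℂ) :
    Bf f (c • g) = (starRingEnd ℂ) c * Bf f g := by
  unfold Bf
  rw [Finset.mul_sum]
  exact Finset.sum_congr rfl fun i _ => by simp [Pi.smul_apply, smul_eq_mul, map_mul]; ring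

lemma Bf_sum_left {ι : Type*} [DecidableEq ι] (s : Finset ι) (c : ι → ℂ) (u : ι → Fin m → ℂ) (g : Fin m → ℂ) :
    Bf (∑ i ∈ s, c i • u i) g = ∑ i ∈ s, c i * Bf (u i) g := by
  induction s using Finset.induction_on with
  | empty => simp [Bf]
  | insert _ _ hx ih =>
      rw [Finset.sum_insert hx, Finset.sum_insert hx, Bf_add_left, Bf_smul_left, ih]

lemma Bf_sum_right {ι : Type*} [DecidableEq ι] (s : Finset ι) (c : ι → ℂ) (u : ι → Fin m → ℂ) (f : Fin m → ℂ) :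
    Bf f (∑ i ∈ s, c i • u i) = ∑ i ∈ s, (starRingEnd ℂ) (c i) * Bf f (u i) := by
  induction s using Finset.induction_on with
  | empty => simp [Bf]
  | insert _ _ hx ih =>
      rw [Finset.sum_insert hx, Finset.sum_insert hx, Bf_add_right, Bf_smul_right, ih]

lemma Bf_self (f : Fin (n+1) → ℂ) :
    Bf f f = ((-‖f 0‖ ^ 2 + ∑ j : Fin n, ‖f j.succ‖ ^ 2 : ℝ) : ℂ) := by
  have key : ∀ z : ℂ, z * (starRingEnd ℂ) z = ((‖z‖ ^ 2 : ℝ) : ℂ) := by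
    intro z
    rw [Complex.mul_conj]
    norm_cast
    rw [← Complex.sq_norm]
  have h0 : epsv (0 : Fin (n+1)) = -1 := by simp [epsv]
  have hs : ∀ j : Fin n, epsv (j.succ) = 1 := by
    intro j; simp [epsv, Fin.val_succ]
  unfold Bf
  rw [Fin.sum_univ_succ, h0]
  simp only [hs, one_mul, neg_mul, key]
  push_cast
  ring

section Main
variable {a b : ℕ → ℝ} {n : ℕ}

lemma mulVec_Fv (hb : ∀ j, 0 < b j) (hn : 1 ≤ n) (z : ℂ) (k : ℕ) (hk : k < n+1) :
    (JacobiH0 a b n).mulVec (fun j : Fin (n+1) => Fv a b z (j:ℕ)) ⟨k, hk⟩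
      = z * Fv a b z k - (if k = n then (b n:ℂ) * Fv a b z (n+1) else 0) := by
  rw [mulVec_apply]
  simp only [Fin.val_mk]
  by_cases e0 : k = 0
  · subst e0
    rw [if_neg (by omega), if_pos (by omega), if_pos rfl, if_neg (by omega)]
    have h1 := Fv_one (a := a) (hb 0) z
    rw [Fv_zero]
    norm_num
    linear_combination -h1
  · obtain ⟨k', rfl⟩ : ∃ k', k = k'+1 := ⟨k-1, by omega⟩
    rw [if_pos (by omega)]
    simp only [Nat.add_sub_cancel]
    by_cases en : k'+1 = n
    · subst en
      rw [if_neg (by omega), if_pos rfl]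
      have hrec := Fv_rec (a := a) (b := b) k' (hb (k'+1)) z
      linear_combination hrec
    · rw [if_pos (by omega), if_neg e0, if_neg en]
      have hrec := Fv_rec (a := a) (b := b) k' (hb (k'+1)) z
      linear_combination hrec

lemma mulVec_Gv (hb : ∀ j, 0 < b j) (hn : 1 ≤ n) (z : ℂ) (k : ℕ) (hk : k < n+1) :
    (JacobiH0 a b n).mulVec (fun j : Fin (n+1) => Gv a b z (j:ℕ)) ⟨k, hk⟩
      = z * Gv a b z k + Fv a b z k - (if k = n then (b n:ℂ) * Gv a b z (n+1) else 0) := by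
  rw [mulVec_apply]
  simp only [Fin.val_mk]
  by_cases e0 : k = 0
  · subst e0
    rw [if_neg (by omega), if_pos (by omega), if_pos rfl, if_neg (by omega)]
    have h1 := Gv_one (a := a) (hb 0) z
    rw [Gv_zero, Fv_zero]
    norm_num
    linear_combination -h1
  · obtain ⟨k', rfl⟩ : ∃ k', k = k'+1 := ⟨k-1, by omega⟩
    rw [if_pos (by omega)]
    simp only [Nat.add_sub_cancel]
    by_cases en : k'+1 = n
    · subst en
      rw [if_neg (by omega), if_pos rfl]
      have hrec := Gv_rec (a := a) (b := b) k' (hb (k'+1)) z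
      linear_combination hrec
    · rw [if_pos (by omega), if_neg e0, if_neg en]
      have hrec := Gv_rec (a := a) (b := b) k' (hb (k'+1)) z
      linear_combination hrec

lemma eig_zero (hb : ∀ j, 0 < b j) (hn : 1 ≤ n) {f : Fin (n+1) → ℂ} {lam : ℂ}
    (hf : (JacobiH0 a b n).mulVec f = lam • f) (h0 : f 0 = 0) : f = 0 := by
  classical
  set fe : ℕ → ℂ := fun k => if h : k < n+1 then f ⟨k, h⟩ else 0 with hfe
  have hff : f = fun j : Fin (n+1) => fe (j:ℕ) := by
    funext j
    simp only [hfe, j.isLt, dif_pos, Fin.eta]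
  have row : ∀ k, ∀ hk : k < n+1,
      (if 0 < k then (b (k-1):ℂ) * fe (k-1) else 0) + (a k:ℂ) * fe k
        + (if k < n then (if k = 0 then -(b 0:ℂ) else (b k:ℂ)) * fe (k+1) else 0)
      = lam * fe k := by
    intro k hk
    have hcong := congrFun hf ⟨k, hk⟩
    rw [hff] at hcong
    rw [mulVec_apply] at hcong
    simpa using hcong
  have key : ∀ k, k < n+1 → fe k = 0 := by
    intro k
    induction k using Nat.strong_induction_on with
    | _ k ih =>
      match k with
      | 0 =>
        intro _
        simp only [hfe, dif_pos (by omega : 0 < n+1)]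
        convert h0 using 2
        simp [Fin.ext_iff]
      | 1 =>
        intro hk1
        have hr := row 0 (by omega)
        rw [if_neg (by omega), if_pos (by omega), if_pos rfl, ih 0 (by omega) (by omega)] at hr
        have hb0 : (b 0 : ℂ) ≠ 0 := by exact_mod_cast (hb 0).ne'
        have hz : (b 0 : ℂ) * fe 1 = 0 := by linear_combination -hr
        exact (mul_eq_zero.mp hz).resolve_left hb0
      | (k2+2) =>
        intro hk2
        have hr := row (k2+1) (by omega)
        rw [if_pos (by omega), if_pos (by omega), if_neg (by omega)] at hr
        simp only [Nat.add_sub_cancel] at hr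
        rw [ih (k2+1) (by omega) (by omega), ih k2 (by omega) (by omega)] at hr
        have hbk : (b (k2+1) : ℂ) ≠ 0 := by exact_mod_cast (hb (k2+1)).ne'
        have hz : (b (k2+1) : ℂ) * fe (k2+2) = 0 := by linear_combination hr
        exact (mul_eq_zero.mp hz).resolve_left hbk
  funext j
  rw [hff]
  simpa using key (j:ℕ) j.isLt

end Main

section Final
variable {a b : ℕ → ℝ} {n : ℕ}

lemma Fv_conj (z : ℂ) (k : ℕ) :
    Fv a b ((starRingEnd ℂ) z) k = (starRingEnd ℂ) (Fv a b z k) := by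
  unfold Fv
  have h := Polynomial.aeval_algHom_apply (Complex.conjAe) z (qp a b k)
  simpa using h

lemma Bf_eigen {f g : Fin (n+1) → ℂ} {lam mu : ℂ}
    (hf : (JacobiH0 a b n).mulVec f = lam • f) (hg : (JacobiH0 a b n).mulVec g = mu • g) :
    (lam - (starRingEnd ℂ) mu) * Bf f g = 0 := by
  have h := Bf_mulVec (a := a) (b := b) f g
  rw [hf, hg, Bf_smul_left, Bf_smul_right] at h
  linear_combination h

/-- the eigenvector attached to a root of `qp (n+1)` -/
lemma vv_eig (hb : ∀ j, 0 < b j) (hn : 1 ≤ n) {z : ℂ} (hz : Fv a b z (n+1) = 0) :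
    (JacobiH0 a b n).mulVec (fun j : Fin (n+1) => Fv a b z (j:ℕ)) =
      z • (fun j : Fin (n+1) => Fv a b z (j:ℕ)) := by
  funext i
  obtain ⟨k, hk⟩ := i
  rw [mulVec_Fv hb hn z k hk, hz]
  simp

lemma vv_ne (z : ℂ) : (fun j : Fin (n+1) => Fv a b z (j:ℕ)) ≠ 0 := by
  intro h
  have h0 := congrFun h 0
  simp only [Fin.val_zero, Fv_zero, Pi.zero_apply] at h0
  exact one_ne_zero h0

lemma NPT_of_Bf_eq_zero (hb : ∀ j, 0 < b j) (hn : 1 ≤ n) {z : ℂ} {f : Fin (n+1) → ℂ}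
    (him : 0 ≤ z.im) (hne : f ≠ 0) (heig : (JacobiH0 a b n).mulVec f = z • f)
    (hB : Bf f f = 0) :
    0 ≤ z.im ∧ ∃ f : Fin (n + 1) → ℂ, f ≠ 0 ∧ (JacobiH0 a b n).mulVec f = z • f ∧
      -‖f 0‖ ^ 2 + ∑ j : Fin n, ‖f j.succ‖ ^ 2 ≤ 0 := by
  refine ⟨him, f, hne, heig, ?_⟩
  have h := (Bf_self f).symm.trans hB
  rw [Complex.ofReal_eq_zero] at h
  rw [h]

/-- Case A : a nonreal eigenvalue gives an NPT eigenvalue. -/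
lemma caseA (hb : ∀ j, 0 < b j) (hn : 1 ≤ n) {z : ℂ}
    (hz : Fv a b z (n+1) = 0) (him : z.im ≠ 0) :
    ∃ lam : ℂ, 0 ≤ lam.im ∧ ∃ f : Fin (n + 1) → ℂ, f ≠ 0 ∧
      (JacobiH0 a b n).mulVec f = lam • f ∧
      -‖f 0‖ ^ 2 + ∑ j : Fin n, ‖f j.succ‖ ^ 2 ≤ 0 := by
  -- pick the root in the closed upper half plane
  obtain ⟨y, hy, hyim⟩ : ∃ y : ℂ, Fv a b y (n+1) = 0 ∧ 0 < y.im := by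
    rcases lt_or_gt_of_ne him with hlt | hgt
    · refine ⟨(starRingEnd ℂ) z, ?_, ?_⟩
      · rw [Fv_conj, hz, map_zero]
      · rw [Complex.conj_im]; linarith
    · exact ⟨z, hz, hgt⟩
  have heig := vv_eig hb hn hy
  have hne := vv_ne (a := a) (b := b) (n := n) y
  have hBz := Bf_eigen heig heig
  have hy2 : y - (starRingEnd ℂ) y ≠ 0 := by
    intro h
    rw [sub_eq_zero] at h
    have himm := congrArg Complex.im h
    rw [Complex.conj_im] at himm
    linarith
  have hB : Bf (fun j : Fin (n+1) => Fv a b y (j:ℕ)) (fun j : Fin (n+1) => Fv a b y (j:ℕ)) = 0 :=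
    (mul_eq_zero.mp hBz).resolve_left hy2
  exact ⟨y, NPT_of_Bf_eq_zero hb hn (le_of_lt hyim) hne heig hB⟩

/-- Case B : a real eigenvalue which is a multiple root gives an NPT eigenvalue. -/
lemma caseB (hb : ∀ j, 0 < b j) (hn : 1 ≤ n) {z : ℂ}
    (hz : Fv a b z (n+1) = 0) (hz' : Gv a b z (n+1) = 0) (him : z.im = 0) :
    ∃ lam : ℂ, 0 ≤ lam.im ∧ ∃ f : Fin (n + 1) → ℂ, f ≠ 0 ∧
      (JacobiH0 a b n).mulVec f = lam • f ∧
      -‖f 0‖ ^ 2 + ∑ j : Fin n, ‖f j.succ‖ ^ 2 ≤ 0 := by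
  set v : Fin (n+1) → ℂ := fun j => Fv a b z (j:ℕ) with hv
  set w : Fin (n+1) → ℂ := fun j => Gv a b z (j:ℕ) with hw
  have heig := vv_eig hb hn hz
  have hne := vv_ne (a := a) (b := b) (n := n) z
  have hweig : (JacobiH0 a b n).mulVec w = z • w + v := by
    funext i
    obtain ⟨k, hk⟩ := i
    rw [hw]
    rw [mulVec_Gv hb hn z k hk, hz']
    simp [hv, hw]
  have hsym := Bf_mulVec (a := a) (b := b) w v
  rw [hweig, heig, Bf_add_left, Bf_smul_left, Bf_smul_right] at hsym
  have hzc : (starRingEnd ℂ) z = z := Complex.conj_eq_iff_im.mpr him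
  rw [hzc] at hsym
  have hB : Bf v v = 0 := by linear_combination hsym
  exact ⟨z, NPT_of_Bf_eq_zero hb hn (by rw [him]) hne heig hB⟩

end Final

section Final2
variable {a b : ℕ → ℝ} {n : ℕ}

lemma Bf_sub_right {m : ℕ} (f g g' : Fin m → ℂ) : Bf f (g - g') = Bf f g - Bf f g' := by
  unfold Bf
  rw [← Finset.sum_sub_distrib]
  exact Finset.sum_congr rfl fun i _ => by simp [Pi.sub_apply, map_sub]; ring

lemma NPT_exists (hb : ∀ j, 0 < b j) (hn : 1 ≤ n) :
    ∃ lam : ℂ, 0 ≤ lam.im ∧ ∃ f : Fin (n + 1) → ℂ, f ≠ 0 ∧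
      (JacobiH0 a b n).mulVec f = lam • f ∧
      -‖f 0‖ ^ 2 + ∑ j : Fin n, ‖f j.succ‖ ^ 2 ≤ 0 := by
  classical
  set P : Polynomial ℂ := (qp a b (n+1)).map (algebraMap ℝ ℂ) with hP
  have heval : ∀ z : ℂ, P.eval z = Fv a b z (n+1) := by
    intro z; rw [hP, Polynomial.eval_map, ← Polynomial.aeval_def]; rfl
  have hcoeff : P.coeff (n+1) ≠ 0 := by
    rw [hP, Polynomial.coeff_map]
    have h := (qp_deg (a := a) hb (n+1)).2
    simpa using h
  have hPne : P ≠ 0 := fun h => hcoeff (by rw [h]; simp)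
  have hdeg : P.natDegree = n+1 :=
    le_antisymm (le_trans Polynomial.natDegree_map_le (qp_deg (a := a) hb (n+1)).1)
      (Polynomial.le_natDegree_of_ne_zero hcoeff)
  have hcard : Multiset.card P.roots = n+1 := by
    rw [← hdeg]; exact (Polynomial.splits_iff_card_roots).mp (IsAlgClosed.splits P)
  have hmem : ∀ z : ℂ, z ∈ P.roots ↔ Fv a b z (n+1) = 0 := by
    intro z; rw [Polynomial.mem_roots hPne, Polynomial.IsRoot, heval]
  by_cases hA : ∃ z ∈ P.roots, z.im ≠ 0
  · obtain ⟨z, hz, him⟩ := hA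
    exact caseA hb hn ((hmem z).mp hz) him
  push_neg at hA
  by_cases hBc : ∃ z ∈ P.roots, 2 ≤ P.roots.count z
  · obtain ⟨z, hz, hcount⟩ := hBc
    have hroot : P.IsRoot z := (Polynomial.mem_roots hPne).mp hz
    rw [Polynomial.count_roots] at hcount
    have hder := Polynomial.derivative_rootMultiplicity_of_root hroot
    have hdpos : 0 < Polynomial.rootMultiplicity z (Polynomial.derivative P) := by
      rw [hder]; omega
    have hdne : Polynomial.derivative P ≠ 0 := by
      intro h; rw [h] at hdpos; simp [Polynomial.rootMultiplicity_zero] at hdpos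
    have hdroot : (Polynomial.derivative P).IsRoot z :=
      (Polynomial.rootMultiplicity_pos hdne).mp hdpos
    have hG : Gv a b z (n+1) = 0 := by
      have h : (Polynomial.derivative P).eval z = Gv a b z (n+1) := by
        rw [hP, Polynomial.derivative_map, Polynomial.eval_map, ← Polynomial.aeval_def]; rfl
      rw [← h]; exact hdroot
    exact caseB hb hn ((hmem z).mp hz) hG (hA z hz)
  push_neg at hBc
  by_contra hno
  have hnodup : P.roots.Nodup := Multiset.nodup_iff_count_le_one.mpr (fun z => by
    by_cases hz : z ∈ P.roots
    · have := hBc z hz; omega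
    · rw [Multiset.count_eq_zero_of_notMem hz]; omega)
  set s : Finset ℂ := P.roots.toFinset with hs
  have hscard : s.card = n+1 := by
    rw [hs, Multiset.toFinset_card_of_nodup hnodup, hcard]
  set u : ℂ → (Fin (n+1) → ℂ) := fun z => fun j => Fv a b z (j:ℕ) with hu
  have hroots : ∀ z ∈ s, Fv a b z (n+1) = 0 := fun z hzs =>
    (hmem z).mp (Multiset.mem_toFinset.mp hzs)
  have heigs : ∀ z ∈ s, (JacobiH0 a b n).mulVec (u z) = z • u z := fun z hzs =>
    vv_eig hb hn (hroots z hzs)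
  have hpos : ∀ z ∈ s, ∃ r : ℝ, 0 < r ∧ Bf (u z) (u z) = (r : ℂ) := by
    intro z hzs
    refine ⟨-‖u z 0‖^2 + ∑ j : Fin n, ‖u z j.succ‖^2, ?_, (Bf_self (u z))⟩
    by_contra hle
    push_neg at hle
    exact hno ⟨z, le_of_eq (hA z (Multiset.mem_toFinset.mp hzs)).symm,
      u z, vv_ne z, heigs z hzs, hle⟩
  have horth : ∀ z ∈ s, ∀ w ∈ s, z ≠ w → Bf (u z) (u w) = 0 := by
    intro z hzs w hws hzw
    have h := Bf_eigen (heigs z hzs) (heigs w hws)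
    have hwz : (starRingEnd ℂ) w = w :=
      Complex.conj_eq_iff_im.mpr (hA w (Multiset.mem_toFinset.mp hws))
    rw [hwz] at h
    exact (mul_eq_zero.mp h).resolve_left (sub_ne_zero.mpr hzw)
  have hli : LinearIndependent ℂ (fun z : ↥s => u (z : ℂ)) := by
    apply Module.End.eigenvectors_linearIndependent' ((JacobiH0 a b n).mulVecLin)
      (fun z : ↥s => (z : ℂ)) Subtype.val_injective
    intro z
    refine ⟨Module.End.mem_eigenspace_iff.mpr ?_, vv_ne (z : ℂ)⟩
    rw [Matrix.mulVecLin_apply]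
    exact heigs (z : ℂ) z.2
  have hfin : Fintype.card ↥s = Module.finrank ℂ (Fin (n+1) → ℂ) := by
    rw [Fintype.card_coe, hscard, Module.finrank_fin_fun]
  haveI : Nonempty ↥s := Finset.Nonempty.to_subtype (Finset.card_pos.mp (by omega))
  let bas := basisOfLinearIndependentOfCardEqFinrank hli hfin
  have hbas : ∀ i : ↥s, bas i = u (i : ℂ) := fun i => by
    simp only [bas, coe_basisOfLinearIndependentOfCardEqFinrank]
  set e0 : Fin (n+1) → ℂ := Pi.single 0 1 with he0
  have hrep : ∑ i : ↥s, bas.repr e0 i • bas i = e0 := Module.Basis.sum_repr bas e0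
  have he0B : Bf e0 e0 = (-1 : ℂ) := by
    rw [Bf_self]
    have h1 : e0 0 = 1 := Pi.single_eq_same 0 1
    have h2 : ∀ j : Fin n, e0 j.succ = 0 := fun j => Pi.single_eq_of_ne (Fin.succ_ne_zero j) 1
    rw [h1]
    simp [h2]
  set c : ↥s → ℂ := fun i => bas.repr e0 i with hc
  have hrep' : e0 = ∑ i : ↥s, c i • u (i:ℂ) := by
    rw [← hrep]; exact Finset.sum_congr rfl fun i _ => by rw [hbas i]
  have hexpand : Bf e0 e0 = ∑ i : ↥s, (c i * (starRingEnd ℂ) (c i)) * Bf (u (i:ℂ)) (u (i:ℂ)) := by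
    conv_lhs => rw [hrep']
    rw [Bf_sum_left]
    refine Finset.sum_congr rfl fun i _ => ?_
    have hsingle : (∑ j : ↥s, (starRingEnd ℂ) (c j) * Bf (u (i:ℂ)) (u (j:ℂ)))
        = (starRingEnd ℂ) (c i) * Bf (u (i:ℂ)) (u (i:ℂ)) := by
      apply Finset.sum_eq_single_of_mem i (Finset.mem_univ i)
      intro j _ hji
      rw [horth (i:ℂ) i.2 (j:ℂ) j.2 (fun hh => hji (Subtype.ext hh).symm)]
      ring
    rw [Bf_sum_right, hsingle]
    ring
  choose rs hrs using fun i : ↥s => hpos (i : ℂ) i.2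
  have hcombo : (-1 : ℂ) = ((∑ i : ↥s, Complex.normSq (c i) * rs i : ℝ) : ℂ) := by
    rw [← he0B, hexpand]
    push_cast
    refine Finset.sum_congr rfl fun i _ => ?_
    rw [(hrs i).2, Complex.mul_conj]
    all_goals push_cast
    all_goals ring
  have hreal : (-1 : ℝ) = ∑ i : ↥s, Complex.normSq (c i) * rs i := by exact_mod_cast hcombo
  have hnn : 0 ≤ ∑ i : ↥s, Complex.normSq (c i) * rs i :=
    Finset.sum_nonneg fun i _ => mul_nonneg (Complex.normSq_nonneg _) (le_of_lt (hrs i).1)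
  linarith

lemma NPT_unique (hb : ∀ j, 0 < b j) (hn : 1 ≤ n) {l1 l2 : ℂ}
    (h1 : 0 ≤ l1.im ∧ ∃ f : Fin (n + 1) → ℂ, f ≠ 0 ∧
      (JacobiH0 a b n).mulVec f = l1 • f ∧
      -‖f 0‖ ^ 2 + ∑ j : Fin n, ‖f j.succ‖ ^ 2 ≤ 0)
    (h2 : 0 ≤ l2.im ∧ ∃ f : Fin (n + 1) → ℂ, f ≠ 0 ∧
      (JacobiH0 a b n).mulVec f = l2 • f ∧
      -‖f 0‖ ^ 2 + ∑ j : Fin n, ‖f j.succ‖ ^ 2 ≤ 0) : l1 = l2 := by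
  obtain ⟨him1, f, hf0, hfe, hfq⟩ := h1
  obtain ⟨him2, g, hg0, hge, hgq⟩ := h2
  by_cases hc : l1 = (starRingEnd ℂ) l2
  · have hi : l1.im = -l2.im := by rw [hc, Complex.conj_im]
    have hre : l1.re = l2.re := by rw [hc, Complex.conj_re]
    have hzero1 : l1.im = 0 := by linarith
    have hzero2 : l2.im = 0 := by linarith
    exact Complex.ext hre (by rw [hzero1, hzero2])
  · have hc' : l2 ≠ (starRingEnd ℂ) l1 := by
      intro h
      apply hc
      rw [h, Complex.conj_conj]
    have hBfg : Bf f g = 0 := by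
      have h := Bf_eigen hfe hge
      exact (mul_eq_zero.mp h).resolve_left (sub_ne_zero.mpr hc)
    have hBgf : Bf g f = 0 := by
      have h := Bf_eigen hge hfe
      exact (mul_eq_zero.mp h).resolve_left (sub_ne_zero.mpr hc')
    have hf0' : f 0 ≠ 0 := fun h => hf0 (eig_zero hb hn hfe h)
    have hg0' : g 0 ≠ 0 := fun h => hg0 (eig_zero hb hn hge h)
    set h : Fin (n+1) → ℂ := g 0 • f - f 0 • g with hh
    have hh0 : h 0 = 0 := by
      simp only [hh, Pi.sub_apply, Pi.smul_apply, smul_eq_mul]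
      ring
    have hBhh : Bf h h = (g 0 * (starRingEnd ℂ) (g 0)) * Bf f f
        + (f 0 * (starRingEnd ℂ) (f 0)) * Bf g g := by
      rw [hh, Bf_sub_left, Bf_sub_right, Bf_sub_right, Bf_smul_left, Bf_smul_left,
        Bf_smul_right, Bf_smul_right, Bf_smul_right, Bf_smul_right, Bf_smul_left, Bf_smul_left,
        hBfg, hBgf]
      ring
    -- the left side is ≥ 0, the right side ≤ 0
    have hself_f := Bf_self f
    have hself_g := Bf_self g
    have hself_h := Bf_self h
    have hcast : ((-‖h 0‖ ^ 2 + ∑ j : Fin n, ‖h j.succ‖ ^ 2 : ℝ) : ℂ)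
        = ((Complex.normSq (g 0) * (-‖f 0‖ ^ 2 + ∑ j : Fin n, ‖f j.succ‖ ^ 2)
          + Complex.normSq (f 0) * (-‖g 0‖ ^ 2 + ∑ j : Fin n, ‖g j.succ‖ ^ 2) : ℝ) : ℂ) := by
      rw [← hself_h, hBhh, hself_f, hself_g]
      push_cast
      rw [Complex.mul_conj, Complex.mul_conj]
      all_goals push_cast
      all_goals ring
    have hr : (-‖h 0‖ ^ 2 + ∑ j : Fin n, ‖h j.succ‖ ^ 2 : ℝ)
        = Complex.normSq (g 0) * (-‖f 0‖ ^ 2 + ∑ j : Fin n, ‖f j.succ‖ ^ 2)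
          + Complex.normSq (f 0) * (-‖g 0‖ ^ 2 + ∑ j : Fin n, ‖g j.succ‖ ^ 2) := by
      exact_mod_cast hcast
    have hrle : (-‖h 0‖ ^ 2 + ∑ j : Fin n, ‖h j.succ‖ ^ 2 : ℝ) ≤ 0 := by
      have n1 : 0 ≤ Complex.normSq (g 0) := Complex.normSq_nonneg _
      have n2 : 0 ≤ Complex.normSq (f 0) := Complex.normSq_nonneg _
      nlinarith
    have hsumnn : (0:ℝ) ≤ ∑ j : Fin n, ‖h j.succ‖ ^ 2 :=
      Finset.sum_nonneg fun j _ => sq_nonneg _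
    have hn0 : ‖h 0‖ = 0 := by rw [hh0]; simp
    have hsum0 : ∑ j : Fin n, ‖h j.succ‖ ^ 2 = 0 := by
      rw [hn0] at hrle
      nlinarith [hrle, hsumnn]
    have hzero : ∀ j : Fin n, h j.succ = 0 := by
      intro j
      have := (Finset.sum_eq_zero_iff_of_nonneg (fun j _ => sq_nonneg ‖h j.succ‖)).mp hsum0
        j (Finset.mem_univ j)
      have hnrm : ‖h j.succ‖ = 0 := by nlinarith [norm_nonneg (h j.succ)]
      exact norm_eq_zero.mp hnrm
    have hzero' : h = 0 := by
      funext i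
      refine Fin.cases ?_ ?_ i
      · exact hh0
      · intro j; exact hzero j
    have heq : g 0 • f = f 0 • g := by
      have := sub_eq_zero.mp hzero'
      exact this
    -- compare eigenvalues
    obtain ⟨i0, hi0⟩ : ∃ i, f i ≠ 0 := by
      by_contra hall
      push_neg at hall
      exact hf0 (funext hall)
    have hcmp : l1 * (g 0 * f i0) = l2 * (g 0 * f i0) := by
      have e1 : (JacobiH0 a b n).mulVec (g 0 • f) = l1 • (g 0 • f) := by
        rw [Matrix.mulVec_smul, hfe, smul_comm]
      have e2 : (JacobiH0 a b n).mulVec (g 0 • f) = l2 • (g 0 • f) := by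
        rw [heq, Matrix.mulVec_smul, hge, smul_comm]
      have := e1.symm.trans e2
      have hci := congrFun this i0
      simpa [Pi.smul_apply, smul_eq_mul, mul_assoc] using hci
    have hne : g 0 * f i0 ≠ 0 := mul_ne_zero hg0' hi0
    exact mul_right_cancel₀ hne hcmp

end Final2


/-- Existence and uniqueness of the eigenvalue of nonpositive type of a truncation. -/
theorem stmt_15 (a b : ℕ → ℝ) (hb : ∀ j, 0 < b j) (n : ℕ) (hn : 1 ≤ n) :
    ∃! lam : ℂ, 0 ≤ lam.im ∧ ∃ f : Fin (n + 1) → ℂ, f ≠ 0 ∧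
      (JacobiH0 a b n).mulVec f = lam • f ∧
      -‖f 0‖ ^ 2 + ∑ j : Fin n, ‖f j.succ‖ ^ 2 ≤ 0 := by
  obtain ⟨lam, hlam⟩ := NPT_exists hb hn
  exact ⟨lam, hlam, fun y hy => NPT_unique hb hn hy hlam⟩
end

section
/- Neutrality of eigenvectors at non-real eigenvalues: for every n ≥ 1, if λ ∈ ℂ with Im λ ≠ 0 and f ∈ ℂ^{n+1} satisfies H_{[0,n]} f = λ f, then −|f_0|² + Σ_{j=1}^{n} |f_j|² = 0. -/
open MeasureTheory Complex Filter

/-- Neutrality of eigenvectors at non-real eigenvalues. -/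
theorem stmt_16 (a b : ℕ → ℝ) (hb : ∀ j, 0 < b j) (n : ℕ) (hn : 1 ≤ n)
    (lam : ℂ) (hlam : lam.im ≠ 0) (f : Fin (n + 1) → ℂ)
    (hf : (JacobiH0 a b n).mulVec f = lam • f) :
    -‖f 0‖ ^ 2 + ∑ j : Fin n, ‖f j.succ‖ ^ 2 = 0 := by
  classical
  set H := JacobiH0 a b n with hH
  set ε : Fin (n+1) → ℂ := fun i => if (i:ℕ) = 0 then -1 else 1 with hε
  have hεreal : ∀ i, (starRingEnd ℂ) (ε i) = ε i := by
    intro i; simp only [hε]; split_ifs <;> simp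
  have hHreal : ∀ i j, (starRingEnd ℂ) (H i j) = H i j := by
    intro i j
    simp only [hH, JacobiH0, Matrix.of_apply]
    split_ifs <;> simp
  have hsym : ∀ i j, ε j * H j i = ε i * H i j := by
    intro i j
    simp only [hH, JacobiH0, Matrix.of_apply, hε]
    split_ifs <;>
      first
        | ring1
        | omega
        | (obtain rfl : i = j := Fin.ext (by omega); ring1)
        | (rw [show (i:ℕ) = 0 from by omega]; ring1)
        | (rw [show (j:ℕ) = 0 from by omega]; ring1)
  set r : ℝ := -‖f 0‖ ^ 2 + ∑ j : Fin n, ‖f j.succ‖ ^ 2 with hrdef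
  have key : ∑ i, ∑ j, ε i * (starRingEnd ℂ) (f i) * (H i j * f j) = lam * r := by
    have h1 : ∀ i : Fin (n+1), ∑ j, ε i * (starRingEnd ℂ) (f i) * (H i j * f j)
        = ε i * (starRingEnd ℂ) (f i) * (H.mulVec f i) := by
      intro i
      rw [Matrix.mulVec, dotProduct, Finset.mul_sum]
    simp only [h1, hf, Pi.smul_apply, smul_eq_mul]
    have h2 : ∀ i : Fin (n+1), ε i * (starRingEnd ℂ) (f i) * (lam * f i)
        = lam * (ε i * ((‖f i‖:ℂ) ^ 2)) := by
      intro i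
      have : (starRingEnd ℂ) (f i) * f i = (‖f i‖:ℂ)^2 := by
        rw [mul_comm, Complex.mul_conj']
        all_goals push_cast; ring1
      calc ε i * (starRingEnd ℂ) (f i) * (lam * f i)
          = lam * (ε i * ((starRingEnd ℂ) (f i) * f i)) := by ring
        _ = lam * (ε i * ((‖f i‖:ℂ)^2)) := by rw [this]
    simp only [h2, ← Finset.mul_sum]
    congr 1
    rw [Fin.sum_univ_succ, hrdef]
    push_cast
    simp [hε]
  have hconj : (starRingEnd ℂ) (lam * r) = lam * r := by
    rw [← key, map_sum]
    rw [Finset.sum_comm]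
    apply Finset.sum_congr rfl; intro j _
    rw [map_sum]
    apply Finset.sum_congr rfl; intro i _
    simp only [map_mul, hεreal, hHreal, Complex.conj_conj]
    calc ε j * f j * (H j i * (starRingEnd ℂ) (f i))
        = (ε j * H j i) * (f j * (starRingEnd ℂ) (f i)) := by ring
      _ = (ε i * H i j) * (f j * (starRingEnd ℂ) (f i)) := by rw [hsym]
      _ = ε i * (starRingEnd ℂ) (f i) * (H i j * f j) := by ring
  have h3 : ((starRingEnd ℂ) lam - lam) * (r:ℂ) = 0 := by
    have := hconj
    rw [map_mul, Complex.conj_ofReal] at this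
    rw [sub_mul, this, sub_self]
  have h4 : (starRingEnd ℂ) lam - lam ≠ 0 := by
    intro h
    apply hlam
    have : (starRingEnd ℂ) lam = lam := by linear_combination h
    rw [Complex.conj_eq_iff_im] at this
    exact this
  have h5 : (r:ℂ) = 0 := by
    rcases mul_eq_zero.mp h3 with h | h
    · exact absurd h h4
    · exact h
  exact_mod_cast h5
end
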